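/- Let n = p^m, where p is a prime and m ≥ 2. Then the independence number of the prime-coprime graph of the cyclic group Z_n equals n − p. -/

import Mathlib

/-- The prime-coprime graph: distinct vertices `g, h` are adjacent iff
`gcd (orderOf g) (orderOf h)` is `1` or a prime. -/
def primeCoprimeGraph (G : Type*) [Monoid G] : SimpleGraph G where
  Adj g h := g ≠ h ∧
    (Nat.gcd (orderOf g) (orderOf h) = 1 ∨ (Nat.gcd (orderOf g) (orderOf h)).Prime)
  symm := by
    constructor
    rintro g h ⟨hne, hd⟩
    exact ⟨hne.symm, by rwa [Nat.gcd_comm]⟩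
  loopless := by constructor; rintro g ⟨hne, -⟩; exact hne rfl

/-- A set of vertices is independent if no two of its elements are adjacent. -/
def IsIndepSet {V : Type*} (Γ : SimpleGraph V) (s : Set V) : Prop :=
  s.Pairwise fun a b => ¬ Γ.Adj a b

open scoped Classical in
/-- The independence number of a graph on a finite vertex set. -/
noncomputable def indepNum {V : Type*} [Fintype V] (Γ : SimpleGraph V) : ℕ :=
  Finset.univ.sup fun s : Finset V => if IsIndepSet Γ (s : Set V) then s.card else 0

/-- A graph is split if its vertex set can be partitioned into two disjoint nonempty
subsets, one a clique and the other an independent set. -/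
def IsSplit {V : Type*} (Γ : SimpleGraph V) : Prop :=
  ∃ K I : Set V, K.Nonempty ∧ I.Nonempty ∧ Disjoint K I ∧ K ∪ I = Set.univ ∧
    Γ.IsClique K ∧ IsIndepSet Γ I

theorem indepNum_cyclic_prime_power (n p m : ℕ) [NeZero n] (hp : p.Prime)
    (hm : 2 ≤ m) (hn : n = p ^ m) :
    indepNum (primeCoprimeGraph (Multiplicative (ZMod n))) = n - p := by
  classical
  set G := Multiplicative (ZMod n)
  have hcard : Fintype.card G = n :=
    (Fintype.card_congr Multiplicative.toAdd).trans (ZMod.card n)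
  -- every element's order divides p^m
  have hdvd : ∀ x : G, orderOf x ∣ p ^ m := by
    intro x
    have h := orderOf_dvd_card (G := G) (x := x)
    have h2 : Fintype.card G ∣ p ^ m := by rw [hcard, hn]
    exact h.trans h2
  -- if x is "small" (order ∣ p), x is adjacent to everything else
  have hsmall_adj : ∀ x y : G, orderOf x ∣ p → x ≠ y →
      (primeCoprimeGraph G).Adj x y := by
    intro x y hx hne
    refine ⟨hne, ?_⟩
    have hg : Nat.gcd (orderOf x) (orderOf y) ∣ p :=
      dvd_trans (Nat.gcd_dvd_left _ _) hx
    rcases (Nat.dvd_prime hp).mp hg with h | h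
    · exact Or.inl h
    · exact Or.inr (h ▸ hp)
  -- if x and y are both "big", they are not adjacent
  have hbig_nadj : ∀ x y : G, ¬ orderOf x ∣ p → ¬ orderOf y ∣ p →
      ¬ (primeCoprimeGraph G).Adj x y := by
    intro x y hx hy hadj
    have hb : ∀ z : G, ¬ orderOf z ∣ p → p ^ 2 ∣ orderOf z := by
      intro z hz
      obtain ⟨k, hk, hko⟩ := (Nat.dvd_prime_pow hp).mp (hdvd z)
      have hk2 : 2 ≤ k := by
        by_contra hlt
        push_neg at hlt
        have hk1 : k ≤ 1 := by omega
        have : orderOf z ∣ p ^ 1 := hko ▸ pow_dvd_pow p hk1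
        exact hz (by simpa using this)
      exact hko ▸ pow_dvd_pow p hk2
    have hggcd : p ^ 2 ∣ Nat.gcd (orderOf x) (orderOf y) :=
      Nat.dvd_gcd (hb x hx) (hb y hy)
    rcases hadj.2 with h | h
    · rw [h] at hggcd
      have := Nat.le_of_dvd one_pos hggcd
      have := hp.two_le
      nlinarith
    · have hpq : p ∣ Nat.gcd (orderOf x) (orderOf y) :=
        dvd_trans (dvd_pow_self p two_ne_zero) hggcd
      have : p = Nat.gcd (orderOf x) (orderOf y) :=
        (Nat.prime_dvd_prime_iff_eq hp h).mp hpq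
      rw [← this] at hggcd
      have := Nat.le_of_dvd hp.pos hggcd
      have := hp.two_le
      nlinarith
  -- counting the small elements
  have hm1 : m - 1 + 1 = m := by omega
  set c : ZMod n := ((p ^ (m - 1) : ℕ) : ZMod n) with hc
  have hsetp : {a : ZMod n | p • a = 0} = (AddSubgroup.zmultiples c : Set (ZMod n)) := by
    ext a
    simp only [Set.mem_setOf_eq, SetLike.mem_coe, AddSubgroup.mem_zmultiples_iff]
    constructor
    · intro ha
      have h0 : p • a = ((p : ℕ) : ZMod n) * a := by
        rw [nsmul_eq_mul]
      have ha' : ((p * a.val : ℕ) : ZMod n) = 0 := by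
        push_cast
        rw [ZMod.natCast_val, ZMod.cast_id]
        rw [← h0, ha]
      rw [ZMod.natCast_eq_zero_iff] at ha'
      have ha'' : p * p ^ (m - 1) ∣ p * a.val := by
        rw [← pow_succ', hm1, ← hn]
        exact ha'
      have hdv : p ^ (m - 1) ∣ a.val := (Nat.mul_dvd_mul_iff_left hp.pos).mp ha''
      obtain ⟨t, ht⟩ := hdv
      refine ⟨(t : ℤ), ?_⟩
      have hav : ((p ^ (m - 1) * t : ℕ) : ZMod n) = a := by
        rw [← ht, ZMod.natCast_val, ZMod.cast_id]
      rw [← hav, zsmul_eq_mul, hc]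
      push_cast
      ring
    · rintro ⟨k, rfl⟩
      have hpc : p • c = 0 := by
        rw [hc, nsmul_eq_mul]
        push_cast
        rw [← Nat.cast_pow, ← Nat.cast_mul, ← pow_succ', hm1, ← hn, ZMod.natCast_self]
      rw [smul_comm, hpc, smul_zero]
  have hcardsmall : (Finset.univ.filter (fun a : ZMod n => p • a = 0)).card = p := by
    rw [← Fintype.card_subtype]
    have e1 : Fintype.card {a : ZMod n // p • a = 0}
        = Nat.card (AddSubgroup.zmultiples c) := by
      rw [← Nat.card_eq_fintype_card]
      exact Nat.card_congr (Equiv.setCongr hsetp)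
    rw [e1, Nat.card_zmultiples, hc, ZMod.addOrderOf_coe _ (NeZero.ne n), hn]
    rw [Nat.gcd_eq_right (pow_dvd_pow p (by omega))]
    rw [Nat.pow_div (by omega) hp.pos, hm1.symm]
    simp
  -- the big set
  set B : Finset G := Finset.univ.filter (fun x : G => ¬ orderOf x ∣ p) with hB
  have hBcard : B.card = n - p := by
    rw [hB, Finset.filter_not, Finset.card_sdiff_of_subset (Finset.filter_subset _ _),
      Finset.card_univ, hcard]
    congr 1
    have : ∀ x : G, (orderOf x ∣ p) ↔ p • (Multiplicative.toAdd x) = 0 := by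
      intro x
      rw [show orderOf x = addOrderOf (Multiplicative.toAdd x) from rfl]
      exact addOrderOf_dvd_iff_nsmul_eq_zero
    refine Eq.trans ?_ hcardsmall
    apply Finset.card_nbij (fun x => Multiplicative.toAdd x)
    · intro x hx
      simp only [Finset.coe_filter, Set.mem_setOf_eq, Finset.mem_coe, Finset.mem_filter, Finset.mem_univ, true_and] at hx ⊢
      exact (this x).mp hx
    · intro x hx y hy hxy
      exact Multiplicative.toAdd.injective hxy
    · intro a ha
      simp only [Finset.coe_filter, Set.mem_setOf_eq, Finset.mem_univ, true_and,
        Set.mem_image] at ha ⊢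
      exact ⟨Multiplicative.ofAdd a, (this (Multiplicative.ofAdd a)).mpr ha, rfl⟩
  have hBindep : IsIndepSet (primeCoprimeGraph G) (B : Set G) := by
    intro x hx y hy hne
    simp only [hB, Finset.coe_filter, Set.mem_setOf_eq, Finset.mem_univ, true_and] at hx hy
    exact hbig_nadj x y hx hy
  have hnp : 2 ≤ n - p := by
    have h1 : p ^ 2 ≤ p ^ m := Nat.pow_le_pow_right hp.pos hm
    have h2 := hp.two_le
    have h3 : p + 2 ≤ p ^ m := by nlinarith [pow_two p ▸ h1]
    rw [hn]
    exact Nat.le_sub_of_add_le (by linarith)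
  -- upper bound for any independent set
  have hub : ∀ s : Finset G, IsIndepSet (primeCoprimeGraph G) (s : Set G) →
      s.card ≤ n - p := by
    intro s hs
    by_cases hall : ∀ x ∈ s, ¬ orderOf x ∣ p
    · have : s ⊆ B := by
        intro x hx
        simp only [hB, Finset.mem_filter, Finset.mem_univ, true_and]
        exact hall x hx
      calc s.card ≤ B.card := Finset.card_le_card this
        _ = n - p := hBcard
    · push_neg at hall
      obtain ⟨x, hxs, hx⟩ := hall
      have hsing : s ⊆ {x} := by
        intro y hy
        rw [Finset.mem_singleton]
        by_contra hne
        exact hs (by exact_mod_cast hxs) (by exact_mod_cast hy)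
          (fun h => hne h.symm) (hsmall_adj x y hx (fun h => hne h.symm))
      calc s.card ≤ 1 := by simpa using Finset.card_le_card hsing
        _ ≤ n - p := by omega
  -- conclude
  unfold indepNum
  apply le_antisymm
  · apply Finset.sup_le
    intro s _
    split_ifs with h
    · exact hub s h
    · omega
  · calc n - p = (if IsIndepSet (primeCoprimeGraph G) (B : Set G)
          then B.card else 0) := by rw [if_pos hBindep, hBcard]
      _ ≤ _ := Finset.le_sup (f := fun s : Finset G =>
          if IsIndepSet (primeCoprimeGraph G) (s : Set G) then s.card else 0)
          (Finset.mem_univ B)
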